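/- Let Q ⊂ R^d be compact and let G be a class of functions from Q to R with ‖g‖_{L²(Q)} ≤ M for every g ∈ G. For λ_N > 0 and an integer R ≥ 1, define F_{R,G,λ_N} = { (u,v) ↦ Σ_{r=1}^R Σ_{s=1}^R λ_{r,s} g_r(u) g_s(v) : g_r ∈ G, 0 ⪯ Λ = (λ_{r,s}) ⪯ λ_N I_R }. Then for every ε > 0, N(ε, F_{R,G,λ_N}, ‖·‖_{L²(Q×Q)}) ≤ [ ((M²R²λ_N + ε)/ε) × { (2e(4M²R²λ_N + ε)/ε) × N(ε/(8MR²λ_N), G, ‖·‖_{L²(Q)}) }^R ]^R. -/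

import Mathlib

open MeasureTheory
open scoped ENNReal

noncomputable section

/-- The `L²(S)` distance between two functions. -/
def L2dist {α : Type*} [MeasureSpace α] (S : Set α) (f g : α → ℝ) : ℝ :=
  Real.sqrt (∫ x in S, (f x - g x) ^ 2)

/-- The `ε`-covering number of `T` with respect to the (pseudo-)distance `ρ`: the smallest
cardinality of a finite subset `T' ⊆ T` such that every `t ∈ T` is within distance `ε` of
some `t' ∈ T'`; it is `∞` if no finite cover exists. -/
def covN {β : Type*} (ρ : β → β → ℝ) (ε : ℝ) (T : Set β) : ℝ≥0∞ :=
  sInf ((fun F : Finset β => (F.card : ℝ≥0∞)) ''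
    {F : Finset β | ↑F ⊆ T ∧ ∀ t ∈ T, ∃ t' ∈ F, ρ t t' ≤ ε})

/-- The generic restricted CovNet kernel class
`F_{R,G,λ} = {Σ_{r,s} λ_{r,s} g_r(u) g_s(v) : g_r ∈ G, 0 ⪯ Λ ⪯ λ·I_R}`. -/
def covnetClassOf {d : ℕ} (G : Set ((Fin d → ℝ) → ℝ)) (R : ℕ) (lam : ℝ) :
    Set ((Fin d → ℝ) × (Fin d → ℝ) → ℝ) :=
  {kern | ∃ (Λ : Matrix (Fin R) (Fin R) ℝ) (g : Fin R → (Fin d → ℝ) → ℝ),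
    Λ.PosSemidef ∧ (lam • (1 : Matrix (Fin R) (Fin R) ℝ) - Λ).PosSemidef ∧
    (∀ r, g r ∈ G) ∧ ∀ p, kern p = ∑ r, ∑ s, Λ r s * g r p.1 * g s p.2}

/-! ### Auxiliary lemmas -/

section Aux

open Matrix

/- covering number helpers -/

lemma covN_le_card' {β : Type*} {ρ : β → β → ℝ} {ε : ℝ} {T : Set β} {F : Finset β}
    (hsub : ↑F ⊆ T) (hcov : ∀ t ∈ T, ∃ t' ∈ F, ρ t t' ≤ ε) :
    covN ρ ε T ≤ F.card :=
  sInf_le ⟨F, ⟨hsub, hcov⟩, rfl⟩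

lemma covN_attained' {β : Type*} {ρ : β → β → ℝ} {ε : ℝ} {T : Set β}
    (h : covN ρ ε T ≠ ⊤) :
    ∃ F : Finset β, ↑F ⊆ T ∧ (∀ t ∈ T, ∃ t' ∈ F, ρ t t' ≤ ε) ∧
      (F.card : ℝ≥0∞) ≤ covN ρ ε T := by
  have hne : {F : Finset β | ↑F ⊆ T ∧ ∀ t ∈ T, ∃ t' ∈ F, ρ t t' ≤ ε}.Nonempty := by
    by_contra hc
    rw [Set.not_nonempty_iff_eq_empty] at hc
    rw [covN, hc] at h
    simp at h
  have hCne : {n : ℕ | ∃ F : Finset β,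
      (↑F ⊆ T ∧ ∀ t ∈ T, ∃ t' ∈ F, ρ t t' ≤ ε) ∧ F.card = n}.Nonempty := by
    obtain ⟨F, hF⟩ := hne
    exact ⟨F.card, F, hF, rfl⟩
  obtain ⟨F₀, hF₀, hcard⟩ := Nat.sInf_mem hCne
  refine ⟨F₀, hF₀.1, hF₀.2, ?_⟩
  refine le_sInf ?_
  rintro x ⟨F, hF, rfl⟩
  have h1 : sInf {n : ℕ | ∃ F : Finset β,
      (↑F ⊆ T ∧ ∀ t ∈ T, ∃ t' ∈ F, ρ t t' ≤ ε) ∧ F.card = n} ≤ F.card :=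
    Nat.sInf_le ⟨F, hF, rfl⟩
  rw [hcard]
  simp only []
  exact_mod_cast h1

lemma one_le_covN' {β : Type*} {ρ : β → β → ℝ} {ε : ℝ} {T : Set β} (hT : T.Nonempty) :
    1 ≤ covN ρ ε T := by
  refine le_sInf ?_
  rintro x ⟨F, ⟨hsub, hcov⟩, rfl⟩
  obtain ⟨t, ht⟩ := hT
  obtain ⟨t', ht', -⟩ := hcov t ht
  have h1 : 1 ≤ F.card := Finset.card_pos.2 ⟨t', ht'⟩
  simp only []
  exact_mod_cast h1

/- grid covering -/

lemma grid_cover' {lam h : ℝ} (hh : 0 < h) (t : ℝ)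
    (ht : t ∈ Set.Icc (-lam) lam) :
    ∃ k : ℕ, k < ⌊2 * lam / h⌋₊ + 1 ∧ |t - (-lam + (k + 1/2) * h)| ≤ h / 2 := by
  refine ⟨⌊(t + lam) / h⌋₊, ?_, ?_⟩
  · have h1 : (t + lam) / h ≤ 2 * lam / h := by
      gcongr
      linarith [ht.2]
    have := Nat.floor_le_floor h1
    omega
  · have hnn : 0 ≤ (t + lam) / h := div_nonneg (by linarith [ht.1]) hh.le
    have hfl : (⌊(t + lam) / h⌋₊ : ℝ) ≤ (t + lam) / h := Nat.floor_le hnn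
    have hfu : (t + lam) / h < ⌊(t + lam) / h⌋₊ + 1 := Nat.lt_floor_add_one _
    set k : ℕ := ⌊(t + lam) / h⌋₊
    have h1 : (k : ℝ) * h ≤ t + lam := by
      rw [← le_div_iff₀ hh]; exact hfl
    have h2 : t + lam < ((k : ℝ) + 1) * h := by
      rw [← div_lt_iff₀ hh]; exact hfu
    rw [abs_le]
    constructor <;> nlinarith

/- entry bound for matrices between 0 and lam * I -/

lemma psd_entry_bound' {R : ℕ} {Λ : Matrix (Fin R) (Fin R) ℝ} {lam : ℝ}
    (h1 : Λ.PosSemidef) (h2 : (lam • (1 : Matrix (Fin R) (Fin R) ℝ) - Λ).PosSemidef)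
    (r s : Fin R) : |Λ r s| ≤ lam := by
  have hsymm : ∀ i j, Λ j i = Λ i j := by
    intro i j
    have := h1.1
    rw [Matrix.IsHermitian] at this
    conv_lhs => rw [← this]
    simp [Matrix.conjTranspose_apply]
  have hlow : ∀ x : Fin R → ℝ, 0 ≤ x ⬝ᵥ (Λ *ᵥ x) := by
    intro x; simpa using h1.dotProduct_mulVec_nonneg x
  have hup : ∀ x : Fin R → ℝ, x ⬝ᵥ (Λ *ᵥ x) ≤ lam * (x ⬝ᵥ x) := by
    intro x
    have := h2.dotProduct_mulVec_nonneg x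
    simp only [Matrix.sub_mulVec, dotProduct_sub, star_trivial] at this
    have h1v : (lam • (1 : Matrix (Fin R) (Fin R) ℝ)) *ᵥ x = lam • x := by
      rw [Matrix.smul_mulVec, Matrix.one_mulVec]
    rw [h1v, dotProduct_smul] at this
    have h3 : x ⬝ᵥ (Λ *ᵥ x) ≤ lam • (x ⬝ᵥ x) := by linarith
    simpa using h3
  have heval : ∀ i j : Fin R, (Pi.single i 1 : Fin R → ℝ) ⬝ᵥ (Λ *ᵥ Pi.single j 1) = Λ i j := by
    intro i j
    rw [Matrix.mulVec_single]
    rw [single_dotProduct]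
    simp
  have hself : ∀ i j : Fin R, i ≠ j →
      (Pi.single i 1 : Fin R → ℝ) ⬝ᵥ (Pi.single j 1 : Fin R → ℝ) = 0 := by
    intro i j hij
    rw [dotProduct_single]
    simp [Pi.single_apply, hij.symm]
  have hself' : ∀ i : Fin R, (Pi.single i 1 : Fin R → ℝ) ⬝ᵥ (Pi.single i 1 : Fin R → ℝ) = 1 := by
    intro i
    rw [dotProduct_single]
    simp
  have hdiag : ∀ i, 0 ≤ Λ i i ∧ Λ i i ≤ lam := by
    intro i
    have l := hlow (Pi.single i 1)
    have u := hup (Pi.single i 1)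
    rw [heval] at l u
    rw [hself'] at u
    constructor <;> linarith
  rcases eq_or_ne r s with rfl | hrs
  · have := hdiag r
    have hl : 0 ≤ lam := le_trans this.1 this.2
    rw [abs_le]; constructor <;> linarith
  · have expand : ∀ c : ℝ, ((Pi.single r 1 : Fin R → ℝ) + c • (Pi.single s (1:ℝ) : Fin R → ℝ)) ⬝ᵥ
        (Λ *ᵥ ((Pi.single r 1 : Fin R → ℝ) + c • (Pi.single s (1:ℝ) : Fin R → ℝ)))
        = Λ r r + c * (Λ r s + Λ s r) + c^2 * Λ s s := by
      intro c
      rw [Matrix.mulVec_add, Matrix.mulVec_smul, dotProduct_add, add_dotProduct,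
        add_dotProduct, dotProduct_smul, smul_dotProduct,
        smul_dotProduct, dotProduct_smul, heval, heval, heval, heval]
      simp only [smul_eq_mul]; ring
    have expand2 : ∀ c : ℝ, ((Pi.single r 1 : Fin R → ℝ) + c • (Pi.single s (1:ℝ) : Fin R → ℝ)) ⬝ᵥ
        ((Pi.single r 1 : Fin R → ℝ) + c • (Pi.single s (1:ℝ) : Fin R → ℝ)) = 1 + c^2 := by
      intro c
      rw [dotProduct_add, add_dotProduct, add_dotProduct,
        dotProduct_smul, smul_dotProduct, smul_dotProduct,
        dotProduct_smul, hself', hself', hself _ _ hrs, hself _ _ (Ne.symm hrs)]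
      simp only [smul_eq_mul]; ring
    have l1 := hlow ((Pi.single r 1 : Fin R → ℝ) + (1:ℝ) • (Pi.single s (1:ℝ) : Fin R → ℝ))
    have u1 := hup ((Pi.single r 1 : Fin R → ℝ) + (1:ℝ) • (Pi.single s (1:ℝ) : Fin R → ℝ))
    have l2 := hlow ((Pi.single r 1 : Fin R → ℝ) + (-1:ℝ) • (Pi.single s (1:ℝ) : Fin R → ℝ))
    have u2 := hup ((Pi.single r 1 : Fin R → ℝ) + (-1:ℝ) • (Pi.single s (1:ℝ) : Fin R → ℝ))
    rw [expand, expand2] at u1 u2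
    rw [expand] at l1 l2
    have hsym := hsymm r s
    have d1 := (hdiag r).1
    have d2 := (hdiag s).1
    have d1' := (hdiag r).2
    have d2' := (hdiag s).2
    rw [abs_le]
    constructor <;> nlinarith

lemma smul_one_posSemidef {R : ℕ} {lam : ℝ} (hlam : 0 ≤ lam) :
    (lam • (1 : Matrix (Fin R) (Fin R) ℝ)).PosSemidef := by
  refine Matrix.PosSemidef.of_dotProduct_mulVec_nonneg ?_ ?_
  · rw [Matrix.IsHermitian, Matrix.conjTranspose_smul, Matrix.conjTranspose_one, star_trivial]
  · intro x
    have h1v : (lam • (1 : Matrix (Fin R) (Fin R) ℝ)) *ᵥ x = lam • x := by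
      rw [Matrix.smul_mulVec, Matrix.one_mulVec]
    rw [h1v, dotProduct_smul, star_trivial]
    simpa using smul_nonneg hlam (dotProduct_star_self_nonneg x)

end Aux

/-! ### L² norm lemmas -/

section L2

lemma eLpNorm_eq_ofReal_sqrt {α : Type*} [MeasurableSpace α] {μ : Measure α}
    {h : α → ℝ} (hm : MemLp h 2 μ) :
    eLpNorm h 2 μ = ENNReal.ofReal (Real.sqrt (∫ x, (h x) ^ 2 ∂μ)) := by
  have h2 : (2 : ℝ≥0∞) ≠ 0 := by norm_num
  have h2' : (2 : ℝ≥0∞) ≠ ∞ := by norm_num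
  rw [eLpNorm_eq_lintegral_rpow_enorm_toReal h2 h2']
  have hpt : ∀ x : α, ‖h x‖ₑ ^ ((2:ℝ≥0∞)).toReal = ENNReal.ofReal ((h x)^2) := by
    intro x
    rw [ENNReal.toReal_ofNat, ← ofReal_norm,
      ENNReal.ofReal_rpow_of_nonneg (norm_nonneg _) (by norm_num)]
    congr 1
    rw [Real.rpow_two, Real.norm_eq_abs, sq_abs]
  simp_rw [hpt]
  have hmeas : AEStronglyMeasurable (fun x => (h x)^2) μ :=
    (hm.1.mul hm.1).congr (Filter.Eventually.of_forall fun x => (sq (h x)).symm)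
  have hint : ∫ x, (h x)^2 ∂μ = (∫⁻ x, ENNReal.ofReal ((h x)^2) ∂μ).toReal := by
    rw [integral_eq_lintegral_of_nonneg_ae (Filter.Eventually.of_forall fun x => sq_nonneg _)
      hmeas]
  rw [hint]
  have hfin : (∫⁻ x, ENNReal.ofReal ((h x)^2) ∂μ) ≠ ∞ := by
    have := hm.2
    rw [eLpNorm_eq_lintegral_rpow_enorm_toReal h2 h2'] at this
    simp_rw [hpt] at this
    intro hc
    rw [hc] at this
    simp [ENNReal.toReal_ofNat, ENNReal.top_rpow_of_pos (by norm_num : (0:ℝ) < 1/2)] at this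
  rw [ENNReal.toReal_ofNat]
  conv_lhs => rw [← ENNReal.ofReal_toReal hfin]
  rw [ENNReal.ofReal_rpow_of_nonneg ENNReal.toReal_nonneg (by norm_num), Real.sqrt_eq_rpow]

variable {α : Type*} [MeasureSpace α]

lemma eLpNorm_sub_eq_ofReal_L2dist {S : Set α} {f g : α → ℝ}
    (hfg : MemLp (f - g) 2 (volume.restrict S)) :
    eLpNorm (f - g) 2 (volume.restrict S) = ENNReal.ofReal (L2dist S f g) :=
  eLpNorm_eq_ofReal_sqrt hfg

lemma L2dist_le_of_eLpNorm_le {S : Set α} {f g : α → ℝ}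
    (hfg : MemLp (f - g) 2 (volume.restrict S)) {c : ℝ} (hc : 0 ≤ c)
    (hb : eLpNorm (f - g) 2 (volume.restrict S) ≤ ENNReal.ofReal c) :
    L2dist S f g ≤ c := by
  rw [eLpNorm_sub_eq_ofReal_L2dist hfg] at hb
  rw [ENNReal.ofReal_le_ofReal_iff hc] at hb
  exact le_trans (le_of_eq rfl) hb

end L2

/-! ### tensor / kernel lemmas -/

section Tensor

variable {α : Type*} [MeasurableSpace α] {μ : Measure α} [SFinite μ]

lemma tensor_aesm {g h : α → ℝ} (hg : AEStronglyMeasurable g μ)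
    (hh : AEStronglyMeasurable h μ) :
    AEStronglyMeasurable (fun p : α × α => g p.1 * h p.2) (μ.prod μ) :=
  (hg.comp_quasiMeasurePreserving Measure.quasiMeasurePreserving_fst).mul
    (hh.comp_quasiMeasurePreserving Measure.quasiMeasurePreserving_snd)

lemma eLpNorm_tensor {g h : α → ℝ} (hg : AEStronglyMeasurable g μ)
    (hh : AEStronglyMeasurable h μ) :
    eLpNorm (fun p : α × α => g p.1 * h p.2) 2 (μ.prod μ)
      = eLpNorm g 2 μ * eLpNorm h 2 μ := by
  have h2 : (2 : ℝ≥0∞) ≠ 0 := by norm_num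
  have h2' : (2 : ℝ≥0∞) ≠ ∞ := by norm_num
  rw [eLpNorm_eq_lintegral_rpow_enorm_toReal h2 h2', eLpNorm_eq_lintegral_rpow_enorm_toReal h2 h2',
    eLpNorm_eq_lintegral_rpow_enorm_toReal h2 h2']
  have hpt : ∀ p : α × α, ‖g p.1 * h p.2‖ₑ ^ ((2:ℝ≥0∞)).toReal
      = ‖g p.1‖ₑ ^ ((2:ℝ≥0∞)).toReal * ‖h p.2‖ₑ ^ ((2:ℝ≥0∞)).toReal := by
    intro p
    rw [enorm_mul, ENNReal.mul_rpow_of_nonneg _ _ (by positivity)]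
  simp_rw [hpt]
  rw [lintegral_prod_mul (f := fun x => ‖g x‖ₑ ^ ((2:ℝ≥0∞)).toReal)
    (g := fun x => ‖h x‖ₑ ^ ((2:ℝ≥0∞)).toReal)
    (hg.aemeasurable.enorm.pow_const _) (hh.aemeasurable.enorm.pow_const _),
    ENNReal.mul_rpow_of_nonneg _ _ (by positivity)]

lemma memℒp_tensor {g h : α → ℝ} (hg : MemLp g 2 μ) (hh : MemLp h 2 μ) :
    MemLp (fun p : α × α => g p.1 * h p.2) 2 (μ.prod μ) := by
  refine ⟨tensor_aesm hg.1 hh.1, ?_⟩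
  rw [eLpNorm_tensor hg.1 hh.1]
  exact ENNReal.mul_lt_top hg.2 hh.2

/-- An elementary scaled tensor term. -/
def termf (c : ℝ) (a b : α → ℝ) : α × α → ℝ := fun p => c * (a p.1 * b p.2)

lemma termf_aesm {c : ℝ} {a b : α → ℝ} (ha : AEStronglyMeasurable a μ)
    (hb : AEStronglyMeasurable b μ) :
    AEStronglyMeasurable (termf c a b) (μ.prod μ) :=
  (aestronglyMeasurable_const : AEStronglyMeasurable (fun _ : α × α => c) _).mul
    (tensor_aesm ha hb)

lemma eLpNorm_termf (c : ℝ) {a b : α → ℝ} (ha : AEStronglyMeasurable a μ)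
    (hb : AEStronglyMeasurable b μ) :
    eLpNorm (termf c a b) 2 (μ.prod μ)
      = ENNReal.ofReal |c| * (eLpNorm a 2 μ * eLpNorm b 2 μ) := by
  have hsm : termf (α := α) c a b = c • (fun p : α × α => a p.1 * b p.2) := by
    funext p; simp [termf]
  rw [hsm, eLpNorm_const_smul, eLpNorm_tensor ha hb]
  congr 1
  simp [ENNReal.ofReal, Real.enorm_eq_ofReal_abs]

lemma eLpNorm_termf_le (c : ℝ) {a b : α → ℝ} {C A B : ℝ}
    (ha : AEStronglyMeasurable a μ) (hb : AEStronglyMeasurable b μ)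
    (hc : |c| ≤ C) (hA : eLpNorm a 2 μ ≤ ENNReal.ofReal A)
    (hB : eLpNorm b 2 μ ≤ ENNReal.ofReal B) (hA0 : 0 ≤ A) :
    eLpNorm (termf c a b) 2 (μ.prod μ) ≤ ENNReal.ofReal (C * A * B) := by
  rw [eLpNorm_termf c ha hb]
  calc ENNReal.ofReal |c| * (eLpNorm a 2 μ * eLpNorm b 2 μ)
      ≤ ENNReal.ofReal C * (ENNReal.ofReal A * ENNReal.ofReal B) :=
        mul_le_mul' (ENNReal.ofReal_le_ofReal hc) (mul_le_mul' hA hB)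
    _ = ENNReal.ofReal (C * A * B) := by
        rw [← ENNReal.ofReal_mul hA0, mul_comm A B,
          ← ENNReal.ofReal_mul (le_trans (abs_nonneg c) hc)]
        ring_nf

/-- kernel function -/
def kerFun {R : ℕ} (Λ : Matrix (Fin R) (Fin R) ℝ) (g : Fin R → α → ℝ) : α × α → ℝ :=
  fun p => ∑ r, ∑ s, Λ r s * g r p.1 * g s p.2

lemma memℒp_kerFun {R : ℕ} (Λ : Matrix (Fin R) (Fin R) ℝ) (g : Fin R → α → ℝ)
    (hg : ∀ r, MemLp (g r) 2 μ) : MemLp (kerFun Λ g) 2 (μ.prod μ) := by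
  have : kerFun (α := α) Λ g = fun p => ∑ r, ∑ s, Λ r s * (g r p.1 * g s p.2) := by
    funext p; simp [kerFun, mul_assoc]
  rw [this]
  exact memLp_finset_sum _ fun r _ => memLp_finset_sum _ fun s _ =>
    (memℒp_tensor (hg r) (hg s)).const_mul _

lemma kerFun_sub_decomp {R : ℕ} (Λ Λ' : Matrix (Fin R) (Fin R) ℝ) (g g' : Fin R → α → ℝ) :
    kerFun Λ g - kerFun Λ' g' = ∑ r, ∑ s,
      (termf (Λ r s - Λ' r s) (g r) (g s) + termf (Λ' r s) (g r - g' r) (g s)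
        + termf (Λ' r s) (g' r) (g s - g' s)) := by
  funext p
  simp only [Pi.sub_apply, kerFun, Finset.sum_apply, Pi.add_apply, termf]
  rw [← Finset.sum_sub_distrib]
  refine Finset.sum_congr rfl fun r _ => ?_
  rw [← Finset.sum_sub_distrib]
  refine Finset.sum_congr rfl fun s _ => ?_
  ring

lemma kerFun_bound {R : ℕ} (Λ Λ' : Matrix (Fin R) (Fin R) ℝ) (g g' : Fin R → α → ℝ)
    {M δg δm lamb : ℝ}
    (hg : ∀ r, AEStronglyMeasurable (g r) μ) (hg' : ∀ r, AEStronglyMeasurable (g' r) μ)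
    (hMb : ∀ r, eLpNorm (g r) 2 μ ≤ ENNReal.ofReal M)
    (hMb' : ∀ r, eLpNorm (g' r) 2 μ ≤ ENNReal.ofReal M)
    (hδ : ∀ r, eLpNorm (g r - g' r) 2 μ ≤ ENNReal.ofReal δg)
    (hm : ∀ r s, |Λ r s - Λ' r s| ≤ δm) (hl : ∀ r s, |Λ' r s| ≤ lamb)
    (hM0 : 0 ≤ M) (hδg0 : 0 ≤ δg) (hδm0 : 0 ≤ δm) (hlamb0 : 0 ≤ lamb) :
    eLpNorm (kerFun Λ g - kerFun Λ' g') 2 (μ.prod μ)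
      ≤ ENNReal.ofReal ((R : ℝ)^2 * (δm * M * M + lamb * δg * M + lamb * M * δg)) := by
  have haesm : ∀ (r s : Fin R), AEStronglyMeasurable
      (termf (Λ r s - Λ' r s) (g r) (g s) + termf (Λ' r s) (g r - g' r) (g s)
        + termf (Λ' r s) (g' r) (g s - g' s)) (μ.prod μ) := fun r s =>
    ((termf_aesm (hg r) (hg s)).add (termf_aesm ((hg r).sub (hg' r)) (hg s))).add
      (termf_aesm (hg' r) ((hg s).sub (hg' s)))
  rw [kerFun_sub_decomp]
  have h1 : eLpNorm (∑ r, ∑ s,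
      (termf (Λ r s - Λ' r s) (g r) (g s) + termf (Λ' r s) (g r - g' r) (g s)
        + termf (Λ' r s) (g' r) (g s - g' s))) 2 (μ.prod μ)
      ≤ ∑ r : Fin R, ∑ s : Fin R,
        ENNReal.ofReal (δm * M * M + lamb * δg * M + lamb * M * δg) := by
    refine le_trans (eLpNorm_sum_le (fun r _ => ?_) (by norm_num)) ?_
    · exact Finset.aestronglyMeasurable_sum _ fun s _ => haesm r s
    refine Finset.sum_le_sum fun r _ => ?_
    refine le_trans (eLpNorm_sum_le (fun s _ => haesm r s) (by norm_num)) ?_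
    refine Finset.sum_le_sum fun s _ => ?_
    have t1 : eLpNorm (termf (Λ r s - Λ' r s) (g r) (g s)) 2 (μ.prod μ)
        ≤ ENNReal.ofReal (δm * M * M) :=
      eLpNorm_termf_le _ (hg r) (hg s) (hm r s) (hMb r) (hMb s) hM0
    have t2 : eLpNorm (termf (Λ' r s) (g r - g' r) (g s)) 2 (μ.prod μ)
        ≤ ENNReal.ofReal (lamb * δg * M) :=
      eLpNorm_termf_le _ ((hg r).sub (hg' r)) (hg s) (hl r s) (hδ r) (hMb s) hδg0
    have t3 : eLpNorm (termf (Λ' r s) (g' r) (g s - g' s)) 2 (μ.prod μ)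
        ≤ ENNReal.ofReal (lamb * M * δg) :=
      eLpNorm_termf_le _ (hg' r) ((hg s).sub (hg' s)) (hl r s) (hMb' r) (hδ s) hM0
    calc eLpNorm _ 2 (μ.prod μ)
        ≤ eLpNorm (termf (Λ r s - Λ' r s) (g r) (g s) + termf (Λ' r s) (g r - g' r) (g s))
            2 (μ.prod μ) + eLpNorm (termf (Λ' r s) (g' r) (g s - g' s)) 2 (μ.prod μ) :=
          eLpNorm_add_le ((termf_aesm (hg r) (hg s)).add
            (termf_aesm ((hg r).sub (hg' r)) (hg s)))
            (termf_aesm (hg' r) ((hg s).sub (hg' s))) (by norm_num)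
      _ ≤ (eLpNorm (termf (Λ r s - Λ' r s) (g r) (g s)) 2 (μ.prod μ)
            + eLpNorm (termf (Λ' r s) (g r - g' r) (g s)) 2 (μ.prod μ))
            + eLpNorm (termf (Λ' r s) (g' r) (g s - g' s)) 2 (μ.prod μ) := by
          gcongr
          exact eLpNorm_add_le (termf_aesm (hg r) (hg s))
            (termf_aesm ((hg r).sub (hg' r)) (hg s)) (by norm_num)
      _ ≤ ENNReal.ofReal (δm * M * M) + ENNReal.ofReal (lamb * δg * M)
            + ENNReal.ofReal (lamb * M * δg) := by gcongr
      _ = ENNReal.ofReal (δm * M * M + lamb * δg * M + lamb * M * δg) := by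
          rw [← ENNReal.ofReal_add (by positivity) (by positivity),
            ← ENNReal.ofReal_add (by positivity) (by positivity)]
  refine h1.trans ?_
  rw [Finset.sum_const, Finset.sum_const, Finset.card_univ, Fintype.card_fin, nsmul_eq_mul,
    nsmul_eq_mul, ← mul_assoc, ← ENNReal.ofReal_natCast R,
    ← ENNReal.ofReal_mul (by positivity), ← ENNReal.ofReal_mul (by positivity)]
  refine ENNReal.ofReal_le_ofReal (le_of_eq ?_)
  ring

end Tensor

/-! ### internal matrix net -/

section Pick

open Classical in
/-- Pick a matrix in the constraint set near a given grid point, if one exists. -/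
def pickMat {R : ℕ} (lam step : ℝ) {K : ℕ} (v : ℕ → ℝ) (A : Fin R → Fin R → Fin K) :
    Matrix (Fin R) (Fin R) ℝ :=
  if hc : ∃ Λ' : Matrix (Fin R) (Fin R) ℝ,
      (Λ'.PosSemidef ∧ (lam • (1 : Matrix (Fin R) (Fin R) ℝ) - Λ').PosSemidef) ∧
      ∀ r s, |v (A r s) - Λ' r s| ≤ step / 2
  then hc.choose else 0

lemma pickMat_mem {R : ℕ} {lam step : ℝ} {K : ℕ} (v : ℕ → ℝ) (A : Fin R → Fin R → Fin K)
    (hlam : 0 ≤ lam) :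
    (pickMat lam step v A).PosSemidef ∧
      (lam • (1 : Matrix (Fin R) (Fin R) ℝ) - pickMat lam step v A).PosSemidef := by
  unfold pickMat
  split_ifs with hc
  · exact hc.choose_spec.1
  · exact ⟨Matrix.PosSemidef.zero, by rw [sub_zero]; exact smul_one_posSemidef hlam⟩

lemma pickMat_near {R : ℕ} {lam step : ℝ} {K : ℕ} (v : ℕ → ℝ) (A : Fin R → Fin R → Fin K)
    (Λ : Matrix (Fin R) (Fin R) ℝ)
    (h1 : Λ.PosSemidef) (h2 : (lam • (1 : Matrix (Fin R) (Fin R) ℝ) - Λ).PosSemidef)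
    (hnear : ∀ r s, |Λ r s - v (A r s)| ≤ step / 2) :
    ∀ r s, |Λ r s - pickMat lam step v A r s| ≤ step := by
  intro r s
  unfold pickMat
  have hc : ∃ Λ' : Matrix (Fin R) (Fin R) ℝ,
      (Λ'.PosSemidef ∧ (lam • (1 : Matrix (Fin R) (Fin R) ℝ) - Λ').PosSemidef) ∧
      ∀ r s, |v (A r s) - Λ' r s| ≤ step / 2 :=
    ⟨Λ, ⟨h1, h2⟩, fun r s => by rw [abs_sub_comm]; exact hnear r s⟩
  rw [dif_pos hc]
  calc |Λ r s - hc.choose r s|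
      ≤ |Λ r s - v (A r s)| + |v (A r s) - hc.choose r s| := abs_sub_le _ _ _
    _ ≤ step / 2 + step / 2 := add_le_add (hnear r s) (hc.choose_spec.2 r s)
    _ = step := by ring

end Pick

/-- **Covering number of the generic CovNet class (Theorem
`covnet_kernel_class_general_bound`).**  For a class `G` of functions in `L²(Q)` with norms
bounded by `M`, the class `F_{R,G,λ_N}` satisfies, for every `ε > 0`,
`N(ε, F_{R,G,λ_N}) ≤ [ (M²R²λ_N+ε)/ε ⬝ { 2e(4M²R²λ_N+ε)/ε ⬝ N(ε/(8MR²λ_N), G) }^R ]^R`. -/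
theorem covering_covnet_class {d : ℕ} (Q : Set (Fin d → ℝ)) (hQ : IsCompact Q)
    (G : Set ((Fin d → ℝ) → ℝ)) (M : ℝ)
    (hG : ∀ g ∈ G, MemLp g 2 (volume.restrict Q))
    (hM : ∀ g ∈ G, Real.sqrt (∫ x in Q, (g x) ^ 2) ≤ M)
    (R : ℕ) (hR : 1 ≤ R) (lam : ℝ) (hlam : 0 < lam)
    (ε : ℝ) (hε : 0 < ε) :
    covN (L2dist (Q ×ˢ Q)) ε (covnetClassOf G R lam)
      ≤ (ENNReal.ofReal ((M ^ 2 * R ^ 2 * lam + ε) / ε) *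
          (ENNReal.ofReal (2 * Real.exp 1 * (4 * M ^ 2 * R ^ 2 * lam + ε) / ε) *
            covN (L2dist Q) (ε / (8 * M * R ^ 2 * lam)) G) ^ R) ^ R := by
  classical
  have hRpos : 0 < R := hR
  have hRne : R ≠ 0 := hRpos.ne'
  have hRR : (0:ℝ) < (R:ℝ) := by exact_mod_cast hRpos
  set a := ENNReal.ofReal ((M ^ 2 * R ^ 2 * lam + ε) / ε) with ha_def
  set b := ENNReal.ofReal (2 * Real.exp 1 * (4 * M ^ 2 * R ^ 2 * lam + ε) / ε) with hb_def
  set δg := ε / (8 * M * R ^ 2 * lam) with hδg_def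
  set N := covN (L2dist Q) δg G with hN_def
  rcases Set.eq_empty_or_nonempty G with hGe | hGne
  · -- `G` empty : the class is empty and its covering number is `0`.
    have hclass : ∀ t ∈ covnetClassOf G R lam, ∃ t' ∈ (∅ : Finset _), L2dist (Q ×ˢ Q) t t' ≤ ε := by
      rintro k ⟨Λ, g, -, -, hgG, -⟩
      exact absurd (hgG ⟨0, hRpos⟩) (by simp [hGe])
    have h0 := covN_le_card' (F := (∅ : Finset _)) (by simp) hclass
    simp only [Finset.card_empty, Nat.cast_zero, le_zero_iff] at h0
    rw [h0]
    exact zero_le ..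
  -- `G` nonempty
  obtain ⟨g₀, hg₀⟩ := hGne
  have hGne : G.Nonempty := ⟨g₀, hg₀⟩
  have hM0 : 0 ≤ M := le_trans (Real.sqrt_nonneg _) (hM g₀ hg₀)
  have hN1 : (1 : ℝ≥0∞) ≤ N := one_le_covN' hGne
  have hMRl0 : 0 ≤ M ^ 2 * R ^ 2 * lam := by positivity
  have he2 : (2:ℝ) ≤ Real.exp 1 := by
    have := Real.add_one_le_exp 1
    linarith
  have ha1 : (1 : ℝ≥0∞) ≤ a := by
    rw [ha_def, show (1:ℝ≥0∞) = ENNReal.ofReal 1 from ENNReal.ofReal_one.symm]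
    apply ENNReal.ofReal_le_ofReal
    rw [le_div_iff₀ hε]
    linarith
  have hb1 : (1 : ℝ≥0∞) ≤ b := by
    rw [hb_def, show (1:ℝ≥0∞) = ENNReal.ofReal 1 from ENNReal.ofReal_one.symm]
    apply ENNReal.ofReal_le_ofReal
    rw [le_div_iff₀ hε]
    nlinarith
  have ha0 : a ≠ 0 := by intro hc; rw [hc] at ha1; simp at ha1
  have hb0 : b ≠ 0 := by intro hc; rw [hc] at hb1; simp at hb1
  by_cases hNtop : N = ⊤
  · have htop : (a * (b * N) ^ R) ^ R = ⊤ := by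
      rw [hNtop, ENNReal.mul_top hb0, ENNReal.top_pow hRne, ENNReal.mul_top ha0,
        ENNReal.top_pow hRne]
    rw [htop]
    exact le_top
  -- setup measures
  have hQm : MeasurableSet Q := hQ.isClosed.measurableSet
  set μ := volume.restrict Q with hμ_def
  have hprodμ : μ.prod μ = volume.restrict (Q ×ˢ Q) := by
    rw [hμ_def, Measure.prod_restrict, ← Measure.volume_eq_prod]
  have hGnorm : ∀ g ∈ G, eLpNorm g 2 μ ≤ ENNReal.ofReal M := fun g hg => by
    rw [eLpNorm_eq_ofReal_sqrt (hG g hg)]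
    exact ENNReal.ofReal_le_ofReal (hM g hg)
  obtain ⟨FG, hFGsub, hFGcov, hFGcard⟩ := covN_attained' hNtop
  rcases eq_or_lt_of_le hM0 with hMz | hMpos
  · -- Case M = 0 : all functions are a.e. zero, a single-element net suffices.
    have hMz : M = 0 := hMz.symm
    set k₀ : (Fin d → ℝ) × (Fin d → ℝ) → ℝ := kerFun 0 (fun _ : Fin R => g₀) with hk₀
    have hk₀mem : k₀ ∈ covnetClassOf G R lam :=
      ⟨0, fun _ => g₀, Matrix.PosSemidef.zero,
        by rw [sub_zero]; exact smul_one_posSemidef hlam.le, fun _ => hg₀, fun p => rfl⟩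
    have hcov : ∀ t ∈ covnetClassOf G R lam,
        ∃ t' ∈ ({k₀} : Finset _), L2dist (Q ×ˢ Q) t t' ≤ ε := by
      intro t ht
      obtain ⟨Λ, g, h1, h2, hgG, hteq⟩ := ht
      have hteq' : t = kerFun Λ g := funext hteq
      refine ⟨k₀, Finset.mem_singleton_self _, ?_⟩
      have hmemt : MemLp (t - k₀) 2 (volume.restrict (Q ×ˢ Q)) := by
        rw [← hprodμ, hteq']
        exact (memℒp_kerFun _ _ fun r => hG _ (hgG r)).sub
          (memℒp_kerFun _ _ fun _ => hG _ hg₀)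
      refine L2dist_le_of_eLpNorm_le hmemt hε.le ?_
      rw [← hprodμ, hteq', hk₀]
      refine le_trans (kerFun_bound Λ 0 g (fun _ => g₀) (μ := μ)
        (δg := 0) (δm := lam) (lamb := lam)
        (fun r => (hG _ (hgG r)).1) (fun _ => (hG _ hg₀).1)
        (fun r => hGnorm _ (hgG r)) (fun _ => hGnorm _ hg₀)
        (fun r => ?_) (fun r s => ?_) (fun r s => ?_) hM0 le_rfl hlam.le hlam.le) ?_
      · -- eLpNorm (g r - g₀) ≤ ofReal 0
        have hgr := hGnorm _ (hgG r)
        have hg0 := hGnorm _ hg₀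
        rw [hMz, ENNReal.ofReal_zero] at hgr hg0
        calc eLpNorm (g r - (fun _ : Fin d → ℝ => g₀) r) 2 μ
            ≤ eLpNorm (g r) 2 μ + eLpNorm g₀ 2 μ :=
              eLpNorm_sub_le (hG _ (hgG r)).1 (hG _ hg₀).1 (by norm_num)
          _ ≤ ENNReal.ofReal 0 := by simpa using add_le_add hgr hg0
      · simpa using psd_entry_bound' h1 h2 r s
      · simp [abs_nonneg, hlam.le]
      · refine ENNReal.ofReal_le_ofReal ?_
        rw [hMz]
        simpa using hε.le
    have hle1 : covN (L2dist (Q ×ˢ Q)) ε (covnetClassOf G R lam) ≤ 1 := by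
      have h1' := covN_le_card' (F := ({k₀} : Finset _)) (by simpa using hk₀mem) hcov
      simpa using h1'
    refine hle1.trans ?_
    calc (1:ℝ≥0∞) = (1 * ((1:ℝ≥0∞) * 1) ^ R) ^ R := by simp
      _ ≤ (a * (b * N) ^ R) ^ R := by gcongr
  -- Case M > 0 : the main construction.
  have hδgpos : 0 < δg := by rw [hδg_def]; positivity
  set step := ε / (4 * M ^ 2 * R ^ 2) with hstep_def
  have hsteppos : 0 < step := by rw [hstep_def]; positivity
  set K := ⌊2 * lam / step⌋₊ + 1 with hK_def
  set v : ℕ → ℝ := fun k => -lam + ((k : ℝ) + 1/2) * step with hv_def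
  set net : Finset ((Fin d → ℝ) × (Fin d → ℝ) → ℝ) :=
    ((Finset.univ : Finset (Fin R → Fin R → Fin K)) ×ˢ
      (Fintype.piFinset fun _ : Fin R => FG)).image
      (fun q => kerFun (pickMat lam step v q.1) q.2) with hnet
  have hnetsub : ↑net ⊆ covnetClassOf G R lam := by
    intro k hk
    rw [hnet] at hk
    simp only [Finset.coe_image, Set.mem_image, Finset.mem_coe, Finset.mem_product] at hk
    obtain ⟨⟨A, gs⟩, ⟨-, hgs⟩, rfl⟩ := hk
    rw [Fintype.mem_piFinset] at hgs
    exact ⟨pickMat lam step v A, gs, (pickMat_mem v A hlam.le).1, (pickMat_mem v A hlam.le).2,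
      fun r => hFGsub (hgs r), fun p => rfl⟩
  have hnetcov : ∀ t ∈ covnetClassOf G R lam, ∃ t' ∈ net, L2dist (Q ×ˢ Q) t t' ≤ ε := by
    intro t ht
    obtain ⟨Λ, g, h1, h2, hgG, hteq⟩ := ht
    have hteq' : t = kerFun Λ g := funext hteq
    have hich : ∀ r : Fin R, ∃ g' ∈ FG, L2dist Q (g r) g' ≤ δg := fun r => hFGcov (g r) (hgG r)
    choose gs hgs1 hgs2 using hich
    have hA : ∀ r s : Fin R, ∃ k : ℕ, k < ⌊2 * lam / step⌋₊ + 1 ∧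
        |Λ r s - (-lam + ((k:ℝ) + 1/2) * step)| ≤ step / 2 := by
      intro r s
      have hent := psd_entry_bound' h1 h2 r s
      exact grid_cover' hsteppos _ ⟨(abs_le.mp hent).1, (abs_le.mp hent).2⟩
    choose kA hkA1 hkA2 using hA
    set A : Fin R → Fin R → Fin K := fun r s => ⟨kA r s, hkA1 r s⟩ with hA_def
    refine ⟨kerFun (pickMat lam step v A) gs, ?_, ?_⟩
    · rw [hnet]
      refine Finset.mem_image.2 ⟨(A, gs), ?_, rfl⟩
      exact Finset.mem_product.2 ⟨Finset.mem_univ _, Fintype.mem_piFinset.2 hgs1⟩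
    · have hmemt : MemLp (t - kerFun (pickMat lam step v A) gs) 2
          (volume.restrict (Q ×ˢ Q)) := by
        rw [← hprodμ, hteq']
        exact (memℒp_kerFun _ _ fun r => hG _ (hgG r)).sub
          (memℒp_kerFun _ _ fun r => hG _ (hFGsub (hgs1 r)))
      refine L2dist_le_of_eLpNorm_le hmemt hε.le ?_
      rw [← hprodμ, hteq']
      refine le_trans (kerFun_bound Λ (pickMat lam step v A) g gs (μ := μ)
        (δg := δg) (δm := step) (lamb := lam)
        (fun r => (hG _ (hgG r)).1) (fun r => (hG _ (hFGsub (hgs1 r))).1)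
        (fun r => hGnorm _ (hgG r)) (fun r => hGnorm _ (hFGsub (hgs1 r)))
        (fun r => ?_) (fun r s => ?_)
        (fun r s => psd_entry_bound' (pickMat_mem v A hlam.le).1 (pickMat_mem v A hlam.le).2 r s)
        hM0 hδgpos.le hsteppos.le hlam.le) ?_
      · rw [eLpNorm_sub_eq_ofReal_L2dist ((hG _ (hgG r)).sub (hG _ (hFGsub (hgs1 r))))]
        exact ENNReal.ofReal_le_ofReal (hgs2 r)
      · exact pickMat_near v A Λ h1 h2 (fun r s => hkA2 r s) r s
      · refine ENNReal.ofReal_le_ofReal ?_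
        have hcalc : (R:ℝ)^2 * (step * M * M + lam * δg * M + lam * M * δg) = ε/2 := by
          rw [hstep_def, hδg_def]
          field_simp
          ring
        rw [hcalc]
        linarith
  have hcard : covN (L2dist (Q ×ˢ Q)) ε (covnetClassOf G R lam) ≤ (net.card : ℝ≥0∞) :=
    covN_le_card' hnetsub hnetcov
  have hcard2 : net.card ≤ K ^ (R * R) * FG.card ^ R := by
    refine le_trans Finset.card_image_le ?_
    rw [Finset.card_product, Fintype.card_piFinset]
    have hcu : (Finset.univ : Finset (Fin R → Fin R → Fin K)).card = K ^ (R * R) := by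
      rw [Finset.card_univ]
      simp [pow_mul]
    rw [hcu, Finset.prod_const, Finset.card_univ, Fintype.card_fin]
  -- real inequality : K ≤ 2e(4M²R²λ+ε)/ε
  have hKb : (K : ℝ≥0∞) ≤ b := by
    rw [← ENNReal.ofReal_natCast K, hb_def]
    apply ENNReal.ofReal_le_ofReal
    have hKr : (K : ℝ) ≤ 2 * lam / step + 1 := by
      rw [hK_def]
      push_cast
      have := Nat.floor_le (show (0:ℝ) ≤ 2 * lam / step by positivity)
      linarith
    have hstep2 : 2 * lam / step = 8 * M ^ 2 * (R:ℝ) ^ 2 * lam / ε := by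
      rw [hstep_def]
      field_simp
      ring
    rw [hstep2] at hKr
    rw [div_add' _ _ _ hε.ne'] at hKr
    refine hKr.trans ?_
    rw [div_le_div_iff_of_pos_right hε]
    nlinarith
  refine hcard.trans ?_
  have hNsq : N ^ R ≤ N ^ (R * R) :=
    pow_le_pow_right' hN1 (Nat.le_mul_of_pos_left R hRpos)
  calc (net.card : ℝ≥0∞)
      ≤ ((K ^ (R * R) * FG.card ^ R : ℕ) : ℝ≥0∞) := by exact_mod_cast hcard2
    _ = (K : ℝ≥0∞) ^ (R * R) * (FG.card : ℝ≥0∞) ^ R := by push_cast; ring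
    _ ≤ b ^ (R * R) * N ^ R := by
        exact mul_le_mul' (pow_le_pow_left' hKb _) (pow_le_pow_left' hFGcard _)
    _ ≤ b ^ (R * R) * N ^ (R * R) := mul_le_mul_right hNsq _
    _ ≤ a ^ R * (b ^ (R * R) * N ^ (R * R)) := by
        refine le_mul_of_one_le_left (zero_le ..) ?_
        exact one_le_pow_of_one_le' ha1 R
    _ = (a * (b * N) ^ R) ^ R := by
        rw [mul_pow, ← pow_mul, mul_pow]
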